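/- Let α be a real number that is not an integer, and define B(t) = (sin²(πα)/π²) Σ_{n∈ℤ} e^{−int}/(n+α)². Then for 0 ≤ t ≤ 2π, B(t) = (1 − (1 − e^{−2πiα}) t/(2π)) e^{iαt}. -/

import Mathlib

open Real Complex
noncomputable def fB (α : ℝ) : ℝ → ℂ := fun x =>
  (1 - (1 - Complex.exp (-2 * π * Complex.I * α)) * x / (2 * π)) * Complex.exp (Complex.I * α * x)

instance : Fact (0 < 2 * π) := ⟨by positivity⟩

lemma fB_end (α : ℝ) : fB α 0 = fB α (0 + 2 * π) := by
  simp only [fB, zero_add]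
  push_cast
  rw [mul_div_cancel_right₀ _ (by simp [Real.pi_ne_zero] : (2 * ((π:ℝ):ℂ)) ≠ 0), sub_sub_cancel]
  rw [show Complex.I * (α:ℂ) * (2*(π:ℝ)) = -(-2 * (π:ℝ) * Complex.I * α) by ring, Complex.exp_neg]
  simp [Complex.exp_ne_zero]

lemma fB_coeff (α : ℝ) (hα : ∀ m : ℤ, α ≠ m) (n : ℤ) :
    fourierCoeff (AddCircle.liftIco (2*π) 0 (fB α)) n
      = ((Real.sin (π*α)^2 / (π^2 * (α - n)^2) : ℝ) : ℂ) := by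
  have hπ : (π:ℝ) ≠ 0 := Real.pi_ne_zero
  have hπC : ((π:ℝ):ℂ) ≠ 0 := Complex.ofReal_ne_zero.mpr hπ
  set q : ℂ := Complex.exp (-2 * π * Complex.I * α) with hqdef
  set c : ℂ := (1 - q) / (2*π) with hcdef
  have hd0 : ((α:ℂ) - n) ≠ 0 := by
    intro h
    apply hα n
    have : ((α - (n:ℝ) : ℝ) : ℂ) = 0 := by push_cast; exact h
    have := Complex.ofReal_eq_zero.mp this
    linarith [sub_eq_zero.mp this]
  set d : ℂ := Complex.I * ((α:ℂ) - n) with hddef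
  have hd : d ≠ 0 := mul_ne_zero Complex.I_ne_zero hd0
  have hE : q * Complex.exp (2 * π * Complex.I * α) = 1 := by
    rw [hqdef, ← Complex.exp_add, show (-2*(π:ℂ)*Complex.I*α + 2*π*Complex.I*α) = 0 by ring,
      Complex.exp_zero]
  rw [fourierCoeff_liftIco_eq, fourierCoeffOn_eq_integral]
  have hcong : ∀ x : ℝ, (fourier (-n) (x : AddCircle (0 + 2*π - 0)) : ℂ) • fB α x
      = (1 - c * x) * Complex.exp (d * x) := by
    intro x
    rw [fourier_coe_apply, smul_eq_mul, fB]
    have h1 : (2*(π:ℂ)*Complex.I*(-n:ℤ)*x/((0 + 2*π - 0 : ℝ):ℂ)) = -Complex.I*n*x := by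
      push_cast
      field_simp [hπC]
      ring
    rw [h1]
    rw [show (1 - (1 - q) * (x:ℂ) / (2*π)) = 1 - c * x by rw [hcdef]; ring]
    rw [mul_comm (Complex.exp _), mul_assoc, ← Complex.exp_add]
    congr 2
    rw [hddef]; ring
  rw [intervalIntegral.integral_congr (g := fun x => (1 - c * x) * Complex.exp (d * x))
    (fun x _ => hcong x)]
  have hG : ∀ x : ℝ, HasDerivAt (fun y : ℝ => ((1 - c*y)/d + c/d^2) * Complex.exp (d*y))
      ((1 - c*x) * Complex.exp (d*x)) x := by
    intro x
    have hre : HasDerivAt (fun y : ℝ => (y:ℂ)) 1 x := Complex.ofRealCLM.hasDerivAt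
    have h1 : HasDerivAt (fun y : ℝ => ((1 - c*(y:ℂ))/d + c/d^2)) (-c/d) x := by
      simpa using (((hre.const_mul c).const_sub 1).div_const d).add_const (c/d^2)
    have h2 : HasDerivAt (fun y : ℝ => Complex.exp (d*y)) (d * Complex.exp (d*x)) x := by
      have := ((hre.const_mul d).cexp)
      simpa [mul_comm] using this
    have := h1.mul h2
    refine this.congr_deriv ?_
    have hdi : d * d⁻¹ = 1 := mul_inv_cancel₀ hd
    clear_value c d
    linear_combination ((1 - c*(x:ℂ)) * Complex.exp (d*(x:ℂ)) + c * Complex.exp (d*(x:ℂ)) * d⁻¹) * hdi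
  rw [intervalIntegral.integral_eq_sub_of_hasDerivAt (fun x _ => hG x)
    ((Continuous.mul (by fun_prop) (by fun_prop)).intervalIntegrable _ _)]
  have hexp2 : Complex.exp (d * ((0 + 2*π : ℝ):ℂ)) = Complex.exp (2 * π * Complex.I * α) := by
    rw [show d * ((0 + 2*π : ℝ):ℂ) = 2*π*Complex.I*α + (-n:ℤ) * (2*π*Complex.I) by
      rw [hddef]; push_cast; ring, Complex.exp_add, Complex.exp_int_mul_two_pi_mul_I, mul_one]
  -- key trig identity
  have hcos2 : Real.cos (2*(π*α)) = 1 - 2*Real.sin (π*α)^2 := by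
    have h1 := Real.cos_two_mul (π*α)
    have h2 := Real.sin_sq_add_cos_sq (π*α)
    linarith
  have hq' : q = Complex.exp (-((2*(π*α):ℝ):ℂ) * Complex.I) := by
    rw [hqdef]; congr 1; push_cast; ring
  have hE' : Complex.exp (2*(π:ℂ)*Complex.I*α) = Complex.exp (((2*(π*α):ℝ):ℂ) * Complex.I) := by
    congr 1; push_cast; ring
  have hprod : Complex.exp (((2*(π*α):ℝ):ℂ) * Complex.I)
      * Complex.exp (-((2*(π*α):ℝ):ℂ) * Complex.I) = 1 := by
    rw [← Complex.exp_add]; simp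
  have htc : Complex.exp (((2*(π*α):ℝ):ℂ) * Complex.I)
      + Complex.exp (-((2*(π*α):ℝ):ℂ) * Complex.I) = 2 * Complex.cos ((2*(π*α):ℝ):ℂ) :=
    (Complex.two_cos _).symm
  have hc : Complex.cos ((2*(π*α):ℝ):ℂ) = 1 - 2*((Real.sin (π*α):ℝ):ℂ)^2 := by
    rw [← Complex.ofReal_cos, hcos2]; push_cast; ring
  have hkey : (1 - q) * (Complex.exp (2*(π:ℂ)*Complex.I*α) - 1)
      = -4 * ((Real.sin (π*α):ℝ):ℂ)^2 := by
    rw [hq', hE']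
    linear_combination htc - hprod + 2*hc
  -- final algebra
  rw [hexp2]
  set E : ℂ := Complex.exp (2*(π:ℂ)*Complex.I*α) with hEdef
  have h2pc : c * (2*(π:ℂ)) = 1 - q := by
    rw [hcdef]; exact div_mul_cancel₀ _ (by simp [hπ] : (2*((π:ℝ):ℂ)) ≠ 0)
  have step1 : ((1 - c*((0 + 2*π:ℝ):ℂ))/d + c/d^2) * E
      - ((1 - c*((0:ℝ):ℂ))/d + c/d^2) * Complex.exp (d * ((0:ℝ):ℂ))
      = (q * E - 1)/d + c*(E - 1)/d^2 := by
    simp only [Complex.ofReal_zero, mul_zero, Complex.exp_zero, Complex.ofReal_add,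
      Complex.ofReal_mul, Complex.ofReal_ofNat, zero_add]
    rw [h2pc, sub_sub_cancel]
    field_simp
    ring
  rw [step1, hE, sub_self, zero_div, zero_add]
  have hd2 : d^2 = -((α:ℂ)-n)^2 := by
    rw [hddef, mul_pow, Complex.I_sq]; ring
  rw [hcdef, hd2, Complex.real_smul]
  push_cast at hkey ⊢
  field_simp [hπC, hd0]
  linear_combination (-((π:ℝ):ℂ)) * hkey

lemma fB_sum_re (α : ℝ) : Summable (fun n : ℤ => Real.sin (π*α)^2 / (π^2*(α-n)^2)) := by
  have h0 := (Real.summable_one_div_int_add_rpow (-α) 2).mpr one_lt_two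
  refine (h0.mul_left (Real.sin (π*α)^2 / π^2)).congr fun n => ?_
  rw [Real.rpow_two, _root_.sq_abs, show ((n:ℝ) + -α)^2 = (α - n)^2 by ring,
    div_mul_div_comm, mul_one]

set_option maxHeartbeats 1000000 in
lemma main' (α : ℝ) (hα : ∀ m : ℤ, α ≠ m) (t : ℝ) (ht0 : 0 ≤ t) (ht : t < 2*π) :
    ((Real.sin (π * α) ^ 2 / π ^ 2 : ℝ) : ℂ) *
        ∑' n : ℤ, Complex.exp (-Complex.I * n * t) / ((n : ℂ) + α) ^ 2 = fB α t := by
  have hπC : ((π:ℝ):ℂ) ≠ 0 := Complex.ofReal_ne_zero.mpr Real.pi_ne_zero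
  have hsum : Summable (fourierCoeff (AddCircle.liftIco (2*π) 0 (fB α))) :=
    (summable_ofReal.mpr (fB_sum_re α)).congr fun n => (fB_coeff α hα n).symm
  have hcont : Continuous (AddCircle.liftIco (2*π) 0 (fB α)) :=
    AddCircle.liftIco_continuous (fB_end α) (Continuous.continuousOn (by
      unfold fB; fun_prop))
  set F : C(AddCircle (2*π), ℂ) := ⟨AddCircle.liftIco (2*π) 0 (fB α), hcont⟩ with hF
  have hsum' : Summable (fourierCoeff (F : AddCircle (2*π) → ℂ)) := hsum
  have H := has_pointwise_sum_fourier_series_of_summable hsum' ((t : AddCircle (2*π)))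
  simp only [hF, ContinuousMap.coe_mk] at H
  rw [AddCircle.liftIco_coe_apply (by simpa using Set.mem_Ico.mpr ⟨ht0, ht⟩)] at H
  have Hterm : ∀ n : ℤ, fourierCoeff (AddCircle.liftIco (2*π) 0 (fB α)) n
        • (fourier n (↑t : AddCircle (2*π)) : ℂ)
      = ((Real.sin (π*α)^2 / (π^2 * (α - n)^2) : ℝ):ℂ) * Complex.exp (Complex.I*n*t) := by
    intro n
    rw [fB_coeff α hα n, smul_eq_mul, fourier_coe_apply]
    congr 2
    field_simp
    push_cast
    ring
  simp only [Hterm] at H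
  have htsum := H.tsum_eq
  rw [← htsum, ← tsum_mul_left]
  rw [tsum_congr (f := fun n : ℤ => ((Real.sin (π * α) ^ 2 / π ^ 2 : ℝ) : ℂ) *
        (Complex.exp (-Complex.I * n * t) / ((n : ℂ) + α) ^ 2))
      (g := fun n : ℤ => ((Real.sin (π*α)^2 / (π^2 * (α - (-n:ℤ))^2) : ℝ):ℂ)
        * Complex.exp (Complex.I*(-n:ℤ)*t))
      (fun n => by
        have e : Complex.exp (Complex.I*((-n:ℤ):ℂ)*t) = Complex.exp (-Complex.I*(n:ℂ)*t) := by
          congr 1; push_cast; ring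
        have hne : ((α:ℝ) + n) ≠ 0 := fun h => hα (-n) (by push_cast; linarith)
        have hneC : ((α:ℂ) + (n:ℂ)) ≠ 0 := by
          have := Complex.ofReal_ne_zero.mpr hne
          push_cast at this
          exact this
        have hcast : ((Real.sin (π*α)^2 / (π^2 * (α - ((-n:ℤ):ℝ))^2) : ℝ):ℂ)
            = ((Real.sin (π*α)^2 / π^2 : ℝ):ℂ) / (((n:ℂ) + α)^2) := by
          rw [show (α - ((-n:ℤ):ℝ)) = α + (n:ℝ) by push_cast; ring]
          simp only [Complex.ofReal_div, Complex.ofReal_mul, Complex.ofReal_pow,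
            Complex.ofReal_add, Complex.ofReal_intCast]
          rw [div_div, add_comm ((α:ℂ)) ((n:ℂ))]
        simp only [e, hcast]
        ring)]
  exact (Equiv.neg ℤ).tsum_eq (fun m : ℤ =>
    ((Real.sin (π*α)^2 / (π^2 * (α - m)^2) : ℝ):ℂ) * Complex.exp (Complex.I*m*t))

/-- For non-integer α, the 2π-periodic function
B(t) = (sin²(πα)/π²) Σ_{n∈ℤ} e^{−int}/(n+α)² has the closed form
B(t) = (1 − (1 − e^{−2πiα}) t/(2π)) e^{iαt} for 0 ≤ t ≤ 2π. -/
theorem bloch_autocorrelation_closed_form (α : ℝ) (hα : ∀ m : ℤ, α ≠ m)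
    (t : ℝ) (ht0 : 0 ≤ t) (ht : t ≤ 2 * π) :
    ((Real.sin (π * α) ^ 2 / π ^ 2 : ℝ) : ℂ) *
        ∑' n : ℤ, Complex.exp (-Complex.I * n * t) / ((n : ℂ) + α) ^ 2
      = (1 - (1 - Complex.exp (-2 * π * Complex.I * α)) * t / (2 * π)) *
          Complex.exp (Complex.I * α * t) := by
  rcases lt_or_eq_of_le ht with h2 | h2
  · exact main' α hα t ht0 h2
  · subst h2
    have h0 := main' α hα 0 le_rfl Real.two_pi_pos
    have hterm : ∀ n : ℤ, Complex.exp (-Complex.I*(n:ℂ)*((2*π:ℝ):ℂ))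
        = Complex.exp (-Complex.I*(n:ℂ)*((0:ℝ):ℂ)) := by
      intro n
      rw [show -Complex.I*(n:ℂ)*((2*π:ℝ):ℂ) = ((-n:ℤ):ℂ)*(2*(π:ℝ)*Complex.I) by push_cast; ring,
        Complex.exp_int_mul_two_pi_mul_I]
      norm_num
    simp only [hterm]
    rw [h0, fB_end α]
    show fB α (0 + 2*π) = _
    rw [zero_add]
    rfl
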